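/- Let A, B, C be an affinely independent triangle in the Euclidean plane whose circumcenter is the origin (‖A‖ = ‖B‖ = ‖C‖ = R, the circumradius). Let a = dist(B,C), b = dist(C,A), c = dist(A,B), let S be twice the area of the triangle, and set S_A = (b²+c²−a²)/2, S_B = (c²+a²−b²)/2, S_C = (a²+b²−c²)/2. Let u, v be real numbers with (3u+v)·S² ≠ 0, and let X be the point with barycentric weights f_A = u·S² + v·S_B·S_C, f_B = u·S² + v·S_C·S_A, f_C = u·S² + v·S_A·S_B, i.e., X = (f_A·A + f_B·B + f_C·C)/(f_A + f_B + f_C). Then, with G = (1/3)·(A+B+C) the centroid, X − G = (2v/(3u+v))·(G − 0); that is, X − G = (2v/(3u+v))·G. -/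

import Mathlib

private lemma normsq2 (P : EuclideanSpace ℝ (Fin 2)) : ‖P‖ ^ 2 = P 0 ^ 2 + P 1 ^ 2 := by
  rw [EuclideanSpace.norm_eq, Real.sq_sqrt (by positivity)]
  simp [Fin.sum_univ_two, sq_abs]

private lemma distsq2 (P Q : EuclideanSpace ℝ (Fin 2)) :
    dist P Q ^ 2 = (P 0 - Q 0) ^ 2 + (P 1 - Q 1) ^ 2 := by
  rw [EuclideanSpace.dist_eq, Real.sq_sqrt (by positivity)]
  simp [Fin.sum_univ_two, Real.dist_eq, sq_abs]

/-- Kimberling's lemma: Let `A, B, C` be an affinely independent triangle in the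
Euclidean plane whose circumcenter is the origin (`‖A‖ = ‖B‖ = ‖C‖ = R`). With side lengths
`a = dist B C`, `b = dist C A`, `c = dist A B`, `S` twice the area of the triangle (in the plane,
`S = |(B₀-A₀)(C₁-A₁) - (B₁-A₁)(C₀-A₀)|`), Conway symbols `S_A, S_B, S_C`, real numbers `u, v`
with `(3u+v)·S² ≠ 0`, and `X` the point with barycentric weights
`(u·S² + v·S_B·S_C : u·S² + v·S_C·S_A : u·S² + v·S_A·S_B)`, we have, with `G` the centroid,
`X - G = (2v/(3u+v)) • G`. -/
theorem stmt_10 (A B C : EuclideanSpace ℝ (Fin 2))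
    (hindep : AffineIndependent ℝ ![A, B, C])
    (R : ℝ) (hA : ‖A‖ = R) (hB : ‖B‖ = R) (hC : ‖C‖ = R)
    (a b c S SA SB SC : ℝ)
    (hab : a = dist B C) (hbc : b = dist C A) (hca : c = dist A B)
    (hS : S = |(B 0 - A 0) * (C 1 - A 1) - (B 1 - A 1) * (C 0 - A 0)|)
    (hSA : SA = (b ^ 2 + c ^ 2 - a ^ 2) / 2)
    (hSB : SB = (c ^ 2 + a ^ 2 - b ^ 2) / 2)
    (hSC : SC = (a ^ 2 + b ^ 2 - c ^ 2) / 2)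
    (u v : ℝ) (huv : (3 * u + v) * S ^ 2 ≠ 0)
    (fA fB fC : ℝ)
    (hfA : fA = u * S ^ 2 + v * SB * SC)
    (hfB : fB = u * S ^ 2 + v * SC * SA)
    (hfC : fC = u * S ^ 2 + v * SA * SB)
    (X G : EuclideanSpace ℝ (Fin 2))
    (hX : X = (fA + fB + fC)⁻¹ • (fA • A + fB • B + fC • C))
    (hG : G = ((1 : ℝ) / 3) • (A + B + C)) :
    X - G = (2 * v / (3 * u + v)) • G := by
  obtain ⟨h3uv, hS2⟩ : (3 * u + v) ≠ 0 ∧ S ^ 2 ≠ 0 := by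
    constructor <;> intro h <;> apply huv <;> rw [h] <;> ring
  have h1 : A 0 ^ 2 + A 1 ^ 2 = B 0 ^ 2 + B 1 ^ 2 := by
    rw [← normsq2 A, ← normsq2 B, hA, hB]
  have h2 : B 0 ^ 2 + B 1 ^ 2 = C 0 ^ 2 + C 1 ^ 2 := by
    rw [← normsq2 B, ← normsq2 C, hB, hC]
  have ha2 : a ^ 2 = (B 0 - C 0) ^ 2 + (B 1 - C 1) ^ 2 := by rw [hab, distsq2]
  have hb2 : b ^ 2 = (C 0 - A 0) ^ 2 + (C 1 - A 1) ^ 2 := by rw [hbc, distsq2]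
  have hc2 : c ^ 2 = (A 0 - B 0) ^ 2 + (A 1 - B 1) ^ 2 := by rw [hca, distsq2]
  have hS2eq : S ^ 2 = ((B 0 - A 0) * (C 1 - A 1) - (B 1 - A 1) * (C 0 - A 0)) ^ 2 := by
    rw [hS, sq_abs]
  -- Key identity per coordinate: the orthocenter weights
  have key0 : SB * SC * A 0 + SC * SA * B 0 + SA * SB * C 0 = S ^ 2 * (A 0 + B 0 + C 0) := by
    rw [hSA, hSB, hSC, ha2, hb2, hc2, hS2eq]
    linear_combination
      ((-1)*(B 1)*(C 0)*(C 1) + (B 1)^2*(C 0) + (B 0)*(C 1)^2 + (-1)*(B 0)*(B 1)*(C 1)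
        + (A 1)*(C 0)*(C 1) + (-1)*(A 1)*(B 1)*(C 0) + (-1)*(A 1)*(B 0)*(C 1)
        + (A 1)*(B 0)*(B 1) + (-1)*(A 0)*(C 1)^2 + 2*(A 0)*(B 1)*(C 1) + (-1)*(A 0)*(B 1)^2) * h1
      + ((B 1)^2*(C 0) + (-1)*(B 0)*(B 1)*(C 1) + (-2)*(A 1)*(B 1)*(C 0) + (A 1)*(B 0)*(C 1)
        + (A 1)*(B 0)*(B 1) + (A 1)^2*(C 0) + (-1)*(A 1)^2*(B 0) + (A 0)*(B 1)*(C 1)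
        + (-1)*(A 0)*(B 1)^2 + (-1)*(A 0)*(A 1)*(C 1) + (A 0)*(A 1)*(B 1)) * h2
  have key1 : SB * SC * A 1 + SC * SA * B 1 + SA * SB * C 1 = S ^ 2 * (A 1 + B 1 + C 1) := by
    rw [hSA, hSB, hSC, ha2, hb2, hc2, hS2eq]
    linear_combination
      ((-1)*(C 1)^3 + (-1)*(C 0)^2*(C 1) + (B 1)*(C 1)^2 + 2*(B 1)*(C 0)^2 + (B 1)^2*(C 1)
        + (-1)*(B 1)^3 + (-1)*(B 0)*(C 0)*(C 1) + (-1)*(B 0)*(B 1)*(C 0) + 2*(B 0)^2*(C 1)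
        + (-1)*(B 0)^2*(B 1) + (-1)*(A 1)*(C 0)^2 + 2*(A 1)*(B 0)*(C 0) + (-1)*(A 1)*(B 0)^2
        + (A 0)*(C 0)*(C 1) + (-1)*(A 0)*(B 1)*(C 0) + (-1)*(A 0)*(B 0)*(C 1)
        + (A 0)*(B 0)*(B 1)) * h1
      + ((B 1)^2*(C 1) + (-1)*(B 1)^3 + (-1)*(B 0)*(B 1)*(C 0) + 2*(B 0)^2*(C 1)
        + (-1)*(B 0)^2*(B 1) + (A 1)*(B 0)*(C 0) + (-1)*(A 1)*(B 0)^2 + (-1)*(A 1)^2*(C 1)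
        + (A 1)^2*(B 1) + (A 0)*(B 1)*(C 0) + (-2)*(A 0)*(B 0)*(C 1) + (A 0)*(B 0)*(B 1)
        + (-1)*(A 0)*(A 1)*(C 0) + (A 0)*(A 1)*(B 0)) * h2
  -- Conway identity: S_A S_B + S_B S_C + S_C S_A = S²
  have conway : SA * SB + SB * SC + SC * SA = S ^ 2 := by
    rw [hSA, hSB, hSC, ha2, hb2, hc2, hS2eq]; ring
  have hsum : fA + fB + fC = (3 * u + v) * S ^ 2 := by
    rw [hfA, hfB, hfC]; linear_combination v * conway
  ext i
  have hgoal : ∀ j : Fin 2,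
      (fA * A j + fB * B j + fC * C j = (u + v) * S ^ 2 * (A j + B j + C j)) →
      (X - G) j = ((2 * v / (3 * u + v)) • G) j := by
    intro j hW
    have : (X - G) j = X j - G j := rfl
    rw [this, PiLp.smul_apply, smul_eq_mul]
    have hXj : X j = (fA + fB + fC)⁻¹ * (fA * A j + fB * B j + fC * C j) := by
      rw [hX]; simp [PiLp.smul_apply, PiLp.add_apply]; ring
    have hGj : G j = (1 / 3) * (A j + B j + C j) := by
      rw [hG]; simp [PiLp.smul_apply, PiLp.add_apply]; ring
    rw [hXj, hGj, hW, hsum]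
    have hS0 : S ≠ 0 := fun h => hS2 (by rw [h]; ring)
    field_simp
    ring
  fin_cases i
  · exact hgoal 0 (by rw [hfA, hfB, hfC]; linear_combination v * key0)
  · exact hgoal 1 (by rw [hfA, hfB, hfC]; linear_combination v * key1)
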